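/- Let G=(X,w,κ,μ) be a graph and 1≤p<∞, with condition (C_p) assumed if p>1. Fix an increasing exhaustion {X_n} of X by finite subsets and let Ω_p be the associated set. (i) If f satisfies (F1), then 𝒜 restricted to Ω_p is accretive on ℓ^p(X,μ): ‖(u−v)+λ(𝒜u−𝒜v)‖_p ≥ ‖u−v‖_p for all u,v∈Ω_p and λ>0. (ii) If f satisfies (F2) with constant L>0, then 𝒜 restricted to Ω_p is L-accretive on ℓ^p(X,μ), i.e. ‖(u−v)+λ(𝒜u−𝒜v)‖_p ≥ (1−Lλ)‖u−v‖_p for all u,v∈Ω_p and 0≤λL<1. -/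

import Mathlib

open Filter Topology MeasureTheory

/-- A weighted graph `G = (X, w, κ, μ)`. -/
structure WGraph (X : Type*) where
  w : X → X → ℝ
  kap : X → ℝ
  mu : X → ℝ
  w_nonneg : ∀ x y, 0 ≤ w x y
  w_symm : ∀ x y, w x y = w y x
  w_loopless : ∀ x, w x x = 0
  w_summable : ∀ x, Summable (fun y => w x y)
  kap_nonneg : ∀ x, 0 ≤ kap x
  mu_pos : ∀ x, 0 < mu x

namespace WGraph

variable {X : Type*}

/-- Adjacency: `x ∼ y` iff `w x y > 0`. -/
def Adj (G : WGraph X) (x y : X) : Prop := 0 < G.w x y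

/-- `G` is connected: any two nodes are joined by a finite walk. -/
def Connected (G : WGraph X) : Prop := ∀ x y : X, Relation.ReflTransGen G.Adj x y

/-- An infinite path: injective sequence of consecutively adjacent nodes. -/
def InfinitePath (G : WGraph X) (γ : ℕ → X) : Prop :=
  Function.Injective γ ∧ ∀ n, G.Adj (γ n) (γ (n + 1))

/-- Condition (IP): every infinite path has infinite total measure. -/
def CondIP (G : WGraph X) : Prop :=
  ∀ γ : ℕ → X, G.InfinitePath γ → ¬ Summable (fun n => G.mu (γ n))

/-- Condition (B): bounded edge degree. -/
def CondB (G : WGraph X) : Prop :=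
  ∃ C : ℝ, ∀ x, (∑' y, G.w x y) / G.mu x ≤ C

/-- Condition (C_p). -/
def CondCp (G : WGraph X) (p : ℝ) : Prop :=
  ∀ x, Summable (fun y => G.w x y ^ p / G.mu y ^ (p - 1))

/-- Membership in `ℓ^p(X,μ)` for `1 ≤ p < ∞`. -/
def memLp (G : WGraph X) (p : ℝ) (u : X → ℝ) : Prop :=
  Summable (fun x => |u x| ^ p * G.mu x)

/-- The `ℓ^p(X,μ)`-norm. -/
noncomputable def lpNorm (G : WGraph X) (p : ℝ) (u : X → ℝ) : ℝ :=
  (∑' x, |u x| ^ p * G.mu x) ^ (1 / p)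

/-- Membership in the formal domain of the graph Laplacian. -/
def inDomLap (G : WGraph X) (u : X → ℝ) : Prop :=
  ∀ x, Summable (fun y => G.w x y * |u y|)

/-- The formal graph Laplacian. -/
noncomputable def lap (G : WGraph X) (u : X → ℝ) (x : X) : ℝ :=
  (1 / G.mu x) * ∑' y, G.w x y * (u x - u y) + (G.kap x / G.mu x) * u x

/-- The nonlinear operator `𝒜 u = -f ∘ u + Δ u`. -/
noncomputable def Aop (G : WGraph X) (f : ℝ → ℝ) (u : X → ℝ) (x : X) : ℝ :=
  -f (u x) + G.lap u x

/-- `dom_p(𝒜)`. -/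
def inDomA (G : WGraph X) (f : ℝ → ℝ) (p : ℝ) (u : X → ℝ) : Prop :=
  G.memLp p u ∧ G.inDomLap u ∧ G.memLp p (G.Aop f u)

end WGraph

/-- Condition (F1): `f` continuous, monotone decreasing, `f 0 = 0`. -/
def CondF1 (f : ℝ → ℝ) : Prop := Continuous f ∧ Antitone f ∧ f 0 = 0

/-- Condition (F2): `f` uniformly Lipschitz with constant `L > 0`, `f 0 = 0`. -/
def CondF2 (f : ℝ → ℝ) (L : ℝ) : Prop :=
  0 < L ∧ (∀ s t : ℝ, |f t - f s| ≤ L * |t - s|) ∧ f 0 = 0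
namespace WGraph

variable {X : Type*}

/-- The Dirichlet Laplacian of the Dirichlet subgraph on `Y ⊆ X`, applied to the
restriction to `Y` of a function on `X` (extended by zero outside `Y`). -/
noncomputable def lapDir (G : WGraph X) (Y : Set X) (u : X → ℝ) (x : X) : ℝ :=
  (1 / G.mu x) * (∑' y : Y, G.w x y.1 * (u x - u y.1))
    + ((G.kap x + ∑' z : ↥(Yᶜ), G.w x z.1) / G.mu x) * u x

-- The approximating operator `𝒜_n = i_n (F + Δ_{dir,n}) π_n` on the Dirichlet
-- subgraph with node set `Y`.
open Classical in
noncomputable def AopDir (G : WGraph X) (f : ℝ → ℝ) (Y : Set X) (u : X → ℝ) (x : X) : ℝ :=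
  if x ∈ Y then -f (u x) + G.lapDir Y u x else 0

open Filter Topology in
/-- The set `Ω_p` associated with the exhaustion `Xn`. -/
def OmegaP (G : WGraph X) (f : ℝ → ℝ) (p : ℝ) (Xn : ℕ → Set X) : Set (X → ℝ) :=
  {u | G.inDomA f p u ∧ ∃ un : ℕ → X → ℝ,
    (∀ n, Function.support (un n) ⊆ Xn n) ∧
    Tendsto (fun n => G.lpNorm p (fun x => un n x - u x)) atTop (nhds 0) ∧
    Tendsto (fun n => G.lpNorm p (fun x => G.AopDir f (Xn n) (un n) x - G.Aop f u x))
      atTop (nhds 0)}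

end WGraph

section Stmt9Aux

open WGraph Filter Topology Function

variable {X : Type*}

/-- The duality map `ψ_p(t) = sign t · |t|^{p-1}`. -/
noncomputable def stmt9psi (p t : ℝ) : ℝ := Real.sign t * |t| ^ (p - 1)

lemma stmt9psi_mono {p : ℝ} (hp : 1 ≤ p) : Monotone (stmt9psi p) := by
  intro a b hab
  unfold stmt9psi
  rcases lt_trichotomy b 0 with hb | hb | hb
  · have ha : a < 0 := lt_of_le_of_lt hab hb
    rw [Real.sign_of_neg ha, Real.sign_of_neg hb]
    have h1 : |b| ^ (p - 1) ≤ |a| ^ (p - 1) := by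
      apply Real.rpow_le_rpow (abs_nonneg b) ?_ (by linarith)
      rw [abs_of_neg ha, abs_of_neg hb]; linarith
    linarith
  · subst hb
    rw [Real.sign_zero, zero_mul]
    rcases lt_or_eq_of_le hab with ha | ha
    · rw [Real.sign_of_neg ha]
      have := Real.rpow_nonneg (abs_nonneg a) (p - 1); nlinarith
    · rw [ha, Real.sign_zero, zero_mul]
  · rw [Real.sign_of_pos hb]
    rcases le_or_gt a 0 with ha | ha
    · have h1 : Real.sign a * |a| ^ (p - 1) ≤ 0 := by
        rcases lt_or_eq_of_le ha with h | h
        · rw [Real.sign_of_neg h]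
          have := Real.rpow_nonneg (abs_nonneg a) (p - 1); nlinarith
        · rw [h, Real.sign_zero, zero_mul]
      have h2 : 0 ≤ |b| ^ (p - 1) := Real.rpow_nonneg (abs_nonneg b) _
      nlinarith
    · rw [Real.sign_of_pos ha, one_mul, one_mul]
      exact Real.rpow_le_rpow (abs_nonneg a)
        (by rw [abs_of_pos ha, abs_of_pos hb]; exact hab) (by linarith)

lemma stmt9_mul_psi {p : ℝ} (hp : 1 ≤ p) (t : ℝ) : t * stmt9psi p t = |t| ^ p := by
  have hpne : p ≠ 0 := by linarith
  unfold stmt9psi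
  rcases lt_trichotomy t 0 with h | h | h
  · have ht : (0 : ℝ) < -t := by linarith
    have h2 : (-t : ℝ) ^ p = (-t) * (-t) ^ (p - 1) := by
      have h3 := Real.rpow_add ht 1 (p - 1)
      rw [show (1 : ℝ) + (p - 1) = p by ring] at h3
      rw [h3, Real.rpow_one]
    rw [Real.sign_of_neg h, abs_of_neg h, h2]; ring
  · subst h; rw [Real.sign_zero, abs_zero, Real.zero_rpow hpne]; ring
  · have h2 : t ^ p = t * t ^ (p - 1) := by
      have h3 := Real.rpow_add h 1 (p - 1)
      rw [show (1 : ℝ) + (p - 1) = p by ring] at h3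
      rw [h3, Real.rpow_one]
    rw [Real.sign_of_pos h, abs_of_pos h, h2]; ring

lemma stmt9_abs_psi_le (p t : ℝ) : |stmt9psi p t| ≤ |t| ^ (p - 1) := by
  unfold stmt9psi
  rw [abs_mul, abs_of_nonneg (Real.rpow_nonneg (abs_nonneg t) _)]
  have h1 : |Real.sign t| ≤ 1 := by
    rcases lt_trichotomy t 0 with h | h | h
    · rw [Real.sign_of_neg h]; norm_num
    · rw [h, Real.sign_zero]; norm_num
    · rw [Real.sign_of_pos h]; norm_num
  nlinarith [Real.rpow_nonneg (abs_nonneg t) (p - 1), abs_nonneg (Real.sign t)]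

/-- The map embedding a function into `ℓ^p` coordinates. -/
noncomputable def stmt9T (G : WGraph X) (p : ℝ) (u : X → ℝ) : X → ℝ :=
  fun x => u x * G.mu x ^ (1 / p)

lemma stmt9_norm_T {G : WGraph X} {p : ℝ} (hp : 1 ≤ p) (u : X → ℝ) (x : X) :
    ‖stmt9T G p u x‖ ^ p = |u x| ^ p * G.mu x := by
  have hμ := G.mu_pos x
  have hpne : p ≠ 0 := by linarith
  unfold stmt9T
  rw [Real.norm_eq_abs, abs_mul, abs_of_nonneg (Real.rpow_nonneg hμ.le _),
    Real.mul_rpow (abs_nonneg _) (Real.rpow_nonneg hμ.le _),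
    ← Real.rpow_mul hμ.le, one_div, inv_mul_cancel₀ hpne, Real.rpow_one]

lemma stmt9_toReal {p : ℝ} (hp : 1 ≤ p) : (ENNReal.ofReal p).toReal = p :=
  ENNReal.toReal_ofReal (by linarith)

lemma stmt9_memLp_iff {G : WGraph X} {p : ℝ} (hp : 1 ≤ p) (u : X → ℝ) :
    G.memLp p u ↔ Memℓp (stmt9T G p u) (ENNReal.ofReal p) := by
  rw [memℓp_gen_iff (by rw [stmt9_toReal hp]; linarith)]
  unfold WGraph.memLp
  constructor <;> intro h
  · refine h.congr ?_
    intro x; rw [stmt9_toReal hp, stmt9_norm_T hp]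
  · refine h.congr ?_
    intro x; rw [stmt9_toReal hp, stmt9_norm_T hp]

/-- The `lp` element associated to a `memLp` function. -/
noncomputable def stmt9mk (G : WGraph X) {p : ℝ} (hp : 1 ≤ p) (u : X → ℝ)
    (hu : G.memLp p u) : lp (fun _ : X => ℝ) (ENNReal.ofReal p) :=
  ⟨stmt9T G p u, (stmt9_memLp_iff hp u).1 hu⟩

lemma stmt9_lpNorm_eq_norm {G : WGraph X} {p : ℝ} (hp : 1 ≤ p) (u : X → ℝ)
    (hu : G.memLp p u) : G.lpNorm p u = ‖stmt9mk G hp u hu‖ := by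
  rw [lp.norm_eq_tsum_rpow (by rw [stmt9_toReal hp]; linarith), stmt9_toReal hp]
  unfold WGraph.lpNorm
  congr 1
  apply tsum_congr
  intro x
  exact (stmt9_norm_T hp u x).symm

lemma stmt9_memLp_add {G : WGraph X} {p : ℝ} (hp : 1 ≤ p) {u v : X → ℝ}
    (hu : G.memLp p u) (hv : G.memLp p v) : G.memLp p (fun x => u x + v x) := by
  rw [stmt9_memLp_iff hp]
  have h : stmt9T G p (fun x => u x + v x) = stmt9T G p u + stmt9T G p v := by
    funext x; simp only [stmt9T, Pi.add_apply]; ring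
  rw [h]
  exact ((stmt9_memLp_iff hp u).1 hu).add ((stmt9_memLp_iff hp v).1 hv)

lemma stmt9_memLp_neg {G : WGraph X} {p : ℝ} (hp : 1 ≤ p) {u : X → ℝ}
    (hu : G.memLp p u) : G.memLp p (fun x => -(u x)) := by
  rw [stmt9_memLp_iff hp]
  have h : stmt9T G p (fun x => -(u x)) = -(stmt9T G p u) := by
    funext x; simp only [stmt9T, Pi.neg_apply]; ring
  rw [h]
  exact ((stmt9_memLp_iff hp u).1 hu).neg

lemma stmt9_memLp_sub {G : WGraph X} {p : ℝ} (hp : 1 ≤ p) {u v : X → ℝ}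
    (hu : G.memLp p u) (hv : G.memLp p v) : G.memLp p (fun x => u x - v x) := by
  have := stmt9_memLp_add hp hu (stmt9_memLp_neg hp hv)
  simpa [sub_eq_add_neg] using this

lemma stmt9_memLp_const_mul {G : WGraph X} {p : ℝ} (hp : 1 ≤ p) {u : X → ℝ}
    (hu : G.memLp p u) (c : ℝ) : G.memLp p (fun x => c * u x) := by
  rw [stmt9_memLp_iff hp]
  have h : stmt9T G p (fun x => c * u x) = c • (stmt9T G p u) := by
    funext x; simp only [stmt9T, Pi.smul_apply, smul_eq_mul]; ring
  rw [h]
  exact ((stmt9_memLp_iff hp u).1 hu).const_smul c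

lemma stmt9_memLp_of_support {G : WGraph X} {p : ℝ} (hp : 1 ≤ p) {u : X → ℝ}
    {Y : Set X} (hY : Y.Finite) (hs : Function.support u ⊆ Y) : G.memLp p u := by
  classical
  apply summable_of_ne_finset_zero (s := hY.toFinset)
  intro x hx
  have hxY : x ∉ Y := by rwa [Set.Finite.mem_toFinset] at hx
  have hux : u x = 0 := by
    by_contra h; exact hxY (hs h)
  rw [hux, abs_zero, Real.zero_rpow (by linarith : p ≠ 0), zero_mul]

lemma stmt9_lpNorm_nonneg (G : WGraph X) (p : ℝ) (u : X → ℝ) : 0 ≤ G.lpNorm p u :=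
  Real.rpow_nonneg (tsum_nonneg fun x =>
    mul_nonneg (Real.rpow_nonneg (abs_nonneg _) _) (G.mu_pos x).le) _

lemma stmt9_lpNorm_neg (G : WGraph X) (p : ℝ) (u : X → ℝ) :
    G.lpNorm p (fun x => -(u x)) = G.lpNorm p u := by
  unfold WGraph.lpNorm
  congr 1
  apply tsum_congr
  intro x
  rw [abs_neg]

lemma stmt9_lpNorm_add_le {G : WGraph X} {p : ℝ} (hp : 1 ≤ p) (u v : X → ℝ)
    (hu : G.memLp p u) (hv : G.memLp p v) :
    G.lpNorm p (fun x => u x + v x) ≤ G.lpNorm p u + G.lpNorm p v := by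
  haveI : Fact (1 ≤ ENNReal.ofReal p) := ⟨ENNReal.one_le_ofReal.2 hp⟩
  rw [stmt9_lpNorm_eq_norm hp _ (stmt9_memLp_add hp hu hv), stmt9_lpNorm_eq_norm hp u hu,
    stmt9_lpNorm_eq_norm hp v hv]
  have h : stmt9mk G hp _ (stmt9_memLp_add hp hu hv) = stmt9mk G hp u hu + stmt9mk G hp v hv := by
    apply Subtype.ext
    rw [lp.coeFn_add]
    funext x
    simp only [stmt9mk, stmt9T, Pi.add_apply]
    ring
  rw [h]
  exact norm_add_le _ _

lemma stmt9_abs_lpNorm_sub {G : WGraph X} {p : ℝ} (hp : 1 ≤ p) (u v : X → ℝ)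
    (hu : G.memLp p u) (hv : G.memLp p v) :
    |G.lpNorm p u - G.lpNorm p v| ≤ G.lpNorm p (fun x => u x - v x) := by
  haveI : Fact (1 ≤ ENNReal.ofReal p) := ⟨ENNReal.one_le_ofReal.2 hp⟩
  rw [stmt9_lpNorm_eq_norm hp _ (stmt9_memLp_sub hp hu hv), stmt9_lpNorm_eq_norm hp u hu,
    stmt9_lpNorm_eq_norm hp v hv]
  have h : stmt9mk G hp _ (stmt9_memLp_sub hp hu hv) = stmt9mk G hp u hu - stmt9mk G hp v hv := by
    apply Subtype.ext
    rw [lp.coeFn_sub]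
    funext x
    simp only [stmt9mk, stmt9T, Pi.sub_apply]
    ring
  rw [h]
  exact abs_norm_sub_norm_le _ _

lemma stmt9_lpNorm_const_mul {G : WGraph X} {p : ℝ} (hp : 1 ≤ p) (c : ℝ) (u : X → ℝ) :
    G.lpNorm p (fun x => c * u x) = |c| * G.lpNorm p u := by
  have hpne : p ≠ 0 := by linarith
  unfold WGraph.lpNorm
  have h1 : ∀ x, |c * u x| ^ p * G.mu x = |c| ^ p * (|u x| ^ p * G.mu x) := by
    intro x
    rw [abs_mul, Real.mul_rpow (abs_nonneg c) (abs_nonneg (u x))]; ring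
  rw [tsum_congr h1, tsum_mul_left,
    Real.mul_rpow (Real.rpow_nonneg (abs_nonneg c) p)
      (tsum_nonneg fun x => mul_nonneg (Real.rpow_nonneg (abs_nonneg _) _) (G.mu_pos x).le),
    ← Real.rpow_mul (abs_nonneg c), mul_one_div, div_self hpne, Real.rpow_one]

lemma stmt9_lpNorm_le_of_le {G : WGraph X} {p : ℝ} (hp : 1 ≤ p) {u v : X → ℝ} {C : ℝ}
    (hv : G.memLp p v) (hC : 0 ≤ C) (h : ∀ x, |u x| ≤ C * |v x|) :
    G.lpNorm p u ≤ C * G.lpNorm p v := by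
  have hpne : p ≠ 0 := by linarith
  have hterm : ∀ x, |u x| ^ p * G.mu x ≤ C ^ p * (|v x| ^ p * G.mu x) := by
    intro x
    have h1 := Real.rpow_le_rpow (abs_nonneg (u x)) (h x) (by linarith : (0:ℝ) ≤ p)
    rw [Real.mul_rpow hC (abs_nonneg (v x))] at h1
    have h2 := mul_le_mul_of_nonneg_right h1 (G.mu_pos x).le
    linarith [h2]
  have hsv : Summable (fun x => C ^ p * (|v x| ^ p * G.mu x)) := hv.mul_left _
  have hsu : Summable (fun x => |u x| ^ p * G.mu x) :=
    hsv.of_nonneg_of_le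
      (fun x => mul_nonneg (Real.rpow_nonneg (abs_nonneg _) _) (G.mu_pos x).le) hterm
  unfold WGraph.lpNorm
  have h2 : ∑' x, |u x| ^ p * G.mu x ≤ C ^ p * ∑' x, |v x| ^ p * G.mu x := by
    rw [← tsum_mul_left]; exact hsu.tsum_le_tsum hterm hsv
  calc (∑' x, |u x| ^ p * G.mu x) ^ (1 / p)
      ≤ (C ^ p * ∑' x, |v x| ^ p * G.mu x) ^ (1 / p) :=
        Real.rpow_le_rpow (tsum_nonneg fun x =>
          mul_nonneg (Real.rpow_nonneg (abs_nonneg _) _) (G.mu_pos x).le) h2 (by positivity)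
    _ = C * (∑' x, |v x| ^ p * G.mu x) ^ (1 / p) := by
        rw [Real.mul_rpow (Real.rpow_nonneg hC _)
          (tsum_nonneg fun x => mul_nonneg (Real.rpow_nonneg (abs_nonneg _) _) (G.mu_pos x).le),
          ← Real.rpow_mul hC, mul_one_div, div_self hpne, Real.rpow_one]

lemma stmt9_lpNorm_eq_sum {G : WGraph X} {p : ℝ} (hp : 1 ≤ p) {Y : Set X} [Fintype ↥Y]
    {u : X → ℝ} (hs : ∀ x ∉ Y, u x = 0) :
    G.lpNorm p u = (∑ x : ↥Y, |u x.1| ^ p * G.mu x.1) ^ (1 / p) := by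
  unfold WGraph.lpNorm
  congr 1
  rw [← tsum_subtype_eq_of_support_subset (s := Y) ?_, tsum_fintype]
  intro x hx
  by_contra hxY
  apply hx
  show |u x| ^ p * G.mu x = 0
  rw [hs x hxY, abs_zero, Real.zero_rpow (by linarith : p ≠ 0), zero_mul]

end Stmt9Aux
section Stmt9Core

open WGraph Filter Topology Function

variable {X : Type*}

open Classical in
lemma stmt9_core (G : WGraph X) {p : ℝ} (hp : 1 ≤ p) {Y : Set X} (hY : Y.Finite)
    (g e : X → ℝ) (hg : Function.support g ⊆ Y) (he : Function.support e ⊆ Y)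
    (hal : ∀ x, 0 ≤ e x * stmt9psi p (g x)) {lam : ℝ} (hlam : 0 ≤ lam) :
    G.lpNorm p g ≤
      G.lpNorm p (fun x => g x + lam * ((if x ∈ Y then G.lapDir Y g x else 0) + e x)) := by
  classical
  haveI : Fintype ↥Y := hY.fintype
  have hpne : p ≠ 0 := by linarith
  have hp0 : 0 < p := by linarith
  set a : X → ℝ := fun x => g x + lam * ((if x ∈ Y then G.lapDir Y g x else 0) + e x) with ha
  have hg0 : ∀ x ∉ Y, g x = 0 := fun x hx => by
    by_contra h; exact hx (hg h)
  have he0 : ∀ x ∉ Y, e x = 0 := fun x hx => by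
    by_contra h; exact hx (he h)
  have ha0 : ∀ x ∉ Y, a x = 0 := fun x hx => by
    simp only [ha, hg0 x hx, he0 x hx, if_neg hx]; ring
  have hredg : G.lpNorm p g = (∑ x : ↥Y, |g x.1| ^ p * G.mu x.1) ^ (1 / p) :=
    stmt9_lpNorm_eq_sum hp hg0
  have hreda : G.lpNorm p a = (∑ x : ↥Y, |a x.1| ^ p * G.mu x.1) ^ (1 / p) :=
    stmt9_lpNorm_eq_sum hp ha0
  set S : ℝ := ∑ x : ↥Y, |g x.1| ^ p * G.mu x.1 with hSdef
  have hS_nonneg : 0 ≤ S :=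
    Finset.sum_nonneg fun x _ =>
      mul_nonneg (Real.rpow_nonneg (abs_nonneg _) _) (G.mu_pos _).le
  -- Key pairing inequality
  have expand : ∀ x : ↥Y, a x.1 * stmt9psi p (g x.1) * G.mu x.1
      = |g x.1| ^ p * G.mu x.1
        + lam * ((∑ y : ↥Y, G.w x.1 y.1 * (g x.1 - g y.1)) * stmt9psi p (g x.1)
          + (G.kap x.1 + ∑' z : ↥(Yᶜ), G.w x.1 z.1) * (g x.1 * stmt9psi p (g x.1))
          + e x.1 * stmt9psi p (g x.1) * G.mu x.1) := by
    intro x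
    have hμ : G.mu x.1 ≠ 0 := (G.mu_pos x.1).ne'
    simp only [ha, if_pos x.2, WGraph.lapDir, tsum_fintype]
    rw [← stmt9_mul_psi hp (g x.1)]
    field_simp
  have key : S ≤ ∑ x : ↥Y, a x.1 * stmt9psi p (g x.1) * G.mu x.1 := by
    rw [Finset.sum_congr rfl (fun x _ => expand x), Finset.sum_add_distrib, ← Finset.mul_sum]
    have pos2 : 0 ≤ ∑ x : ↥Y, (∑ y : ↥Y, G.w x.1 y.1 * (g x.1 - g y.1)) * stmt9psi p (g x.1) := by
      have hterm : ∀ (s t : ℝ), 0 ≤ (s - t) * (stmt9psi p s - stmt9psi p t) := by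
        intro s t
        rcases le_total s t with h | h
        · have := stmt9psi_mono hp h
          nlinarith
        · have := stmt9psi_mono hp h
          exact mul_nonneg (by linarith) (by linarith)
      have h1 : ∑ x : ↥Y, (∑ y : ↥Y, G.w x.1 y.1 * (g x.1 - g y.1)) * stmt9psi p (g x.1)
          = ∑ x : ↥Y, ∑ y : ↥Y, G.w x.1 y.1 * (g x.1 - g y.1) * stmt9psi p (g x.1) := by
        apply Finset.sum_congr rfl; intro x _; rw [Finset.sum_mul]
      have h2 : ∑ x : ↥Y, ∑ y : ↥Y, G.w x.1 y.1 * (g x.1 - g y.1) * stmt9psi p (g x.1)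
          = ∑ x : ↥Y, ∑ y : ↥Y, G.w x.1 y.1 * (g y.1 - g x.1) * stmt9psi p (g y.1) := by
        rw [Finset.sum_comm]
        apply Finset.sum_congr rfl; intro x _
        apply Finset.sum_congr rfl; intro y _
        rw [G.w_symm y.1 x.1]
      have h3 : 0 ≤ ∑ x : ↥Y, ∑ y : ↥Y, (G.w x.1 y.1 * (g x.1 - g y.1) * stmt9psi p (g x.1)
          + G.w x.1 y.1 * (g y.1 - g x.1) * stmt9psi p (g y.1)) := by
        apply Finset.sum_nonneg; intro x _
        apply Finset.sum_nonneg; intro y _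
        have h4 := hterm (g x.1) (g y.1)
        have h5 := G.w_nonneg x.1 y.1
        nlinarith
      have h6 : ∑ x : ↥Y, ∑ y : ↥Y, (G.w x.1 y.1 * (g x.1 - g y.1) * stmt9psi p (g x.1)
          + G.w x.1 y.1 * (g y.1 - g x.1) * stmt9psi p (g y.1))
          = (∑ x : ↥Y, ∑ y : ↥Y, G.w x.1 y.1 * (g x.1 - g y.1) * stmt9psi p (g x.1))
          + ∑ x : ↥Y, ∑ y : ↥Y, G.w x.1 y.1 * (g y.1 - g x.1) * stmt9psi p (g y.1) := by
        simp only [Finset.sum_add_distrib]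
      rw [h6, ← h2] at h3
      rw [h1]
      linarith
    have pos1 : 0 ≤ ∑ x : ↥Y, (G.kap x.1 + ∑' z : ↥(Yᶜ), G.w x.1 z.1)
        * (g x.1 * stmt9psi p (g x.1)) := by
      apply Finset.sum_nonneg; intro x _
      apply mul_nonneg
      · exact add_nonneg (G.kap_nonneg x.1) (tsum_nonneg fun z => G.w_nonneg x.1 z.1)
      · rw [stmt9_mul_psi hp]
        exact Real.rpow_nonneg (abs_nonneg _) _
    have pos3 : 0 ≤ ∑ x : ↥Y, e x.1 * stmt9psi p (g x.1) * G.mu x.1 :=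
      Finset.sum_nonneg fun x _ => mul_nonneg (hal x.1) (G.mu_pos x.1).le
    have h7 : 0 ≤ ∑ x : ↥Y, ((∑ y : ↥Y, G.w x.1 y.1 * (g x.1 - g y.1)) * stmt9psi p (g x.1)
        + (G.kap x.1 + ∑' z : ↥(Yᶜ), G.w x.1 z.1) * (g x.1 * stmt9psi p (g x.1))
        + e x.1 * stmt9psi p (g x.1) * G.mu x.1) := by
      simp only [Finset.sum_add_distrib]
      linarith
    nlinarith [mul_nonneg hlam h7]
  -- termwise replace pairing by |a| |g|^(p-1) μ
  have habs : ∀ x : ↥Y, a x.1 * stmt9psi p (g x.1) * G.mu x.1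
      ≤ |a x.1| * |g x.1| ^ (p - 1) * G.mu x.1 := by
    intro x
    have h1 : a x.1 * stmt9psi p (g x.1) ≤ |a x.1| * |g x.1| ^ (p - 1) := by
      calc a x.1 * stmt9psi p (g x.1) ≤ |a x.1 * stmt9psi p (g x.1)| := le_abs_self _
        _ = |a x.1| * |stmt9psi p (g x.1)| := abs_mul _ _
        _ ≤ |a x.1| * |g x.1| ^ (p - 1) :=
            mul_le_mul_of_nonneg_left (stmt9_abs_psi_le p _) (abs_nonneg _)
    exact mul_le_mul_of_nonneg_right h1 (G.mu_pos x.1).le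
  have key2 : S ≤ ∑ x : ↥Y, |a x.1| * |g x.1| ^ (p - 1) * G.mu x.1 :=
    key.trans (Finset.sum_le_sum fun x _ => habs x)
  rcases eq_or_lt_of_le hp with hp1 | hp1
  · -- p = 1
    subst hp1
    rw [hredg, hreda]
    simp only [sub_self, Real.rpow_zero, mul_one, div_self (one_ne_zero : (1:ℝ) ≠ 0),
      Real.rpow_one] at key2 ⊢
    exact key2
  · -- p > 1
    set q : ℝ := p / (p - 1) with hq
    have hp1' : p - 1 ≠ 0 := by linarith
    have hpq : Real.HolderConjugate p q :=
      (Real.holderConjugate_iff_eq_conjExponent hp1).2 hq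
    have hq_pos : 0 < q := by
      rw [hq]; exact div_pos (by linarith) (by linarith)
    have hqne : q ≠ 0 := hq_pos.ne'
    have holder := Real.inner_le_Lp_mul_Lq (Finset.univ : Finset ↥Y)
      (fun x => |a x.1| * G.mu x.1 ^ (1 / p))
      (fun x => |g x.1| ^ (p - 1) * G.mu x.1 ^ (1 / q)) hpq
    have E1 : ∀ x : ↥Y, (|a x.1| * G.mu x.1 ^ (1 / p)) * (|g x.1| ^ (p - 1) * G.mu x.1 ^ (1 / q))
        = |a x.1| * |g x.1| ^ (p - 1) * G.mu x.1 := by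
      intro x
      have hμ := G.mu_pos x.1
      have h1 : G.mu x.1 ^ (1 / p) * G.mu x.1 ^ (1 / q) = G.mu x.1 := by
        rw [← Real.rpow_add hμ]
        rw [show 1 / p + 1 / q = 1 by
          have := hpq.inv_add_inv_eq_one
          rw [one_div, one_div]; linarith]
        exact Real.rpow_one _
      calc (|a x.1| * G.mu x.1 ^ (1 / p)) * (|g x.1| ^ (p - 1) * G.mu x.1 ^ (1 / q))
          = |a x.1| * |g x.1| ^ (p - 1) * (G.mu x.1 ^ (1 / p) * G.mu x.1 ^ (1 / q)) := by ring
        _ = |a x.1| * |g x.1| ^ (p - 1) * G.mu x.1 := by rw [h1]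
    have E2 : ∀ x : ↥Y, (|(|a x.1| * G.mu x.1 ^ (1 / p))|) ^ p = |a x.1| ^ p * G.mu x.1 := by
      intro x
      have hμ := G.mu_pos x.1
      rw [abs_of_nonneg (mul_nonneg (abs_nonneg _) (Real.rpow_nonneg hμ.le _)),
        Real.mul_rpow (abs_nonneg _) (Real.rpow_nonneg hμ.le _),
        ← Real.rpow_mul hμ.le, one_div, inv_mul_cancel₀ hpne, Real.rpow_one]
    have E3 : ∀ x : ↥Y, (|(|g x.1| ^ (p - 1) * G.mu x.1 ^ (1 / q))|) ^ q
        = |g x.1| ^ p * G.mu x.1 := by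
      intro x
      have hμ := G.mu_pos x.1
      rw [abs_of_nonneg (mul_nonneg (Real.rpow_nonneg (abs_nonneg _) _)
          (Real.rpow_nonneg hμ.le _)),
        Real.mul_rpow (Real.rpow_nonneg (abs_nonneg _) _) (Real.rpow_nonneg hμ.le _),
        ← Real.rpow_mul (abs_nonneg _), ← Real.rpow_mul hμ.le,
        show (p - 1) * q = p by rw [hq]; field_simp,
        one_div, inv_mul_cancel₀ hqne, Real.rpow_one]
    rw [Finset.sum_congr rfl (fun x _ => E1 x), Finset.sum_congr rfl (fun x _ => E2 x),
      Finset.sum_congr rfl (fun x _ => E3 x)] at holder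
    -- now : ∑ |a||g|^{p-1}μ ≤ (∑|a|^p μ)^{1/p} * S^{1/q}
    have key3 : S ≤ (∑ x : ↥Y, |a x.1| ^ p * G.mu x.1) ^ (1 / p) * S ^ (1 / q) :=
      key2.trans holder
    rw [hredg, hreda]
    rcases eq_or_lt_of_le hS_nonneg with hS0 | hS0
    · rw [← hS0, Real.zero_rpow (one_div_ne_zero hpne)]
      exact Real.rpow_nonneg (Finset.sum_nonneg fun x _ =>
        mul_nonneg (Real.rpow_nonneg (abs_nonneg _) _) (G.mu_pos _).le) _
    · have hSq : 0 < S ^ (1 / q) := Real.rpow_pos_of_pos hS0 _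
      conv_lhs => rw [show (1 : ℝ) / p = 1 - 1 / q from by
        have := hpq.inv_add_inv_eq_one
        rw [one_div, one_div]; linarith]
      rw [Real.rpow_sub hS0, Real.rpow_one, div_le_iff₀ hSq]
      exact key3
end Stmt9Core
section Stmt9Finite

open WGraph Filter Topology Function

variable {X : Type*}

lemma stmt9_lapDir_sub (G : WGraph X) {Y : Set X} (hY : Y.Finite) (u v : X → ℝ) (x : X) :
    G.lapDir Y u x - G.lapDir Y v x = G.lapDir Y (fun t => u t - v t) x := by
  classical
  haveI : Fintype ↥Y := hY.fintype
  simp only [WGraph.lapDir, tsum_fintype]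
  have hA : (∑ y : ↥Y, G.w x y.1 * (u x - u y.1)) - (∑ y : ↥Y, G.w x y.1 * (v x - v y.1))
      = ∑ y : ↥Y, G.w x y.1 * ((u x - v x) - (u y.1 - v y.1)) := by
    rw [← Finset.sum_sub_distrib]
    apply Finset.sum_congr rfl; intro y _; ring
  linear_combination (1 / G.mu x) * hA

open Classical in
lemma stmt9_AopDir_diff (G : WGraph X) {f : ℝ → ℝ} {Y : Set X} (hY : Y.Finite)
    (u v : X → ℝ) (x : X) :
    G.AopDir f Y u x - G.AopDir f Y v x
      = (if x ∈ Y then G.lapDir Y (fun t => u t - v t) x else 0)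
        + (if x ∈ Y then f (v x) - f (u x) else 0) := by
  by_cases hx : x ∈ Y
  · simp only [WGraph.AopDir, if_pos hx]
    rw [← stmt9_lapDir_sub G hY u v x]
    ring
  · simp only [WGraph.AopDir, if_neg hx]
    ring

open Classical in
lemma stmt9_finite_F1 (G : WGraph X) {p : ℝ} (hp : 1 ≤ p) {f : ℝ → ℝ} (hf : CondF1 f)
    {Y : Set X} (hY : Y.Finite) (u v : X → ℝ)
    (hu : Function.support u ⊆ Y) (hv : Function.support v ⊆ Y)
    {lam : ℝ} (hlam : 0 ≤ lam) :
    G.lpNorm p (fun x => u x - v x) ≤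
      G.lpNorm p (fun x => (u x - v x) + lam * (G.AopDir f Y u x - G.AopDir f Y v x)) := by
  set g : X → ℝ := fun x => u x - v x with hgdef
  set e : X → ℝ := fun x => if x ∈ Y then f (v x) - f (u x) else 0 with hedef
  have hgs : Function.support g ⊆ Y := by
    intro x hx
    rw [Function.mem_support] at hx
    by_contra hxY
    have h1 : u x = 0 := by by_contra h; exact hxY (hu h)
    have h2 : v x = 0 := by by_contra h; exact hxY (hv h)
    apply hx
    simp only [hgdef, h1, h2, sub_zero]
  have hes : Function.support e ⊆ Y := by
    intro x hx
    rw [Function.mem_support] at hx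
    by_contra hxY
    apply hx
    simp only [hedef, if_neg hxY]
  have hal : ∀ x, 0 ≤ e x * stmt9psi p (g x) := by
    intro x
    by_cases hxY : x ∈ Y
    · simp only [hedef, if_pos hxY]
      rcases lt_trichotomy (g x) 0 with h | h | h
      · have huv : u x ≤ v x := by
          have : u x - v x < 0 := h
          linarith
        have hfe : f (v x) - f (u x) ≤ 0 := by
          have := hf.2.1 huv
          linarith
        have hpsi : stmt9psi p (g x) ≤ 0 := by
          unfold stmt9psi
          rw [Real.sign_of_neg h]
          have := Real.rpow_nonneg (abs_nonneg (g x)) (p - 1)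
          nlinarith
        nlinarith
      · rw [h]
        unfold stmt9psi
        rw [Real.sign_zero, zero_mul, mul_zero]
      · have huv : v x ≤ u x := by
          have : 0 < u x - v x := h
          linarith
        have hfe : 0 ≤ f (v x) - f (u x) := by
          have := hf.2.1 huv
          linarith
        have hpsi : 0 ≤ stmt9psi p (g x) := by
          unfold stmt9psi
          rw [Real.sign_of_pos h, one_mul]
          exact Real.rpow_nonneg (abs_nonneg _) _
        exact mul_nonneg hfe hpsi
    · simp only [hedef, if_neg hxY, zero_mul, le_refl]
  have hcore := stmt9_core G hp hY g e hgs hes hal hlam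
  have heq : (fun x => (u x - v x) + lam * (G.AopDir f Y u x - G.AopDir f Y v x))
      = fun x => g x + lam * ((if x ∈ Y then G.lapDir Y g x else 0) + e x) := by
    funext x
    rw [stmt9_AopDir_diff G hY u v x]
  rw [heq]
  exact hcore

open Classical in
lemma stmt9_finite_F2 (G : WGraph X) {p : ℝ} (hp : 1 ≤ p) {f : ℝ → ℝ} {L : ℝ}
    (hf : CondF2 f L) {Y : Set X} (hY : Y.Finite) (u v : X → ℝ)
    (hu : Function.support u ⊆ Y) (hv : Function.support v ⊆ Y)
    {lam : ℝ} (hlam : 0 ≤ lam) :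
    (1 - L * lam) * G.lpNorm p (fun x => u x - v x) ≤
      G.lpNorm p (fun x => (u x - v x) + lam * (G.AopDir f Y u x - G.AopDir f Y v x)) := by
  set g : X → ℝ := fun x => u x - v x with hgdef
  set e : X → ℝ := fun x => if x ∈ Y then f (v x) - f (u x) else 0 with hedef
  have hgs : Function.support g ⊆ Y := by
    intro x hx
    rw [Function.mem_support] at hx
    by_contra hxY
    have h1 : u x = 0 := by by_contra h; exact hxY (hu h)
    have h2 : v x = 0 := by by_contra h; exact hxY (hv h)
    apply hx
    simp only [hgdef, h1, h2, sub_zero]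
  have hes : Function.support e ⊆ Y := by
    intro x hx
    rw [Function.mem_support] at hx
    by_contra hxY
    apply hx
    simp only [hedef, if_neg hxY]
  -- the Laplacian part alone is accretive
  have hcore := stmt9_core G hp hY g (fun _ => 0) hgs
    (by intro x hx; rw [Function.mem_support] at hx; exact absurd rfl hx)
    (fun x => by simp) hlam
  -- memLp facts
  have hmg : G.memLp p g := stmt9_memLp_of_support hp hY hgs
  have hme : G.memLp p e := stmt9_memLp_of_support hp hY hes
  have hebound : ∀ x, |e x| ≤ L * |g x| := by
    intro x
    by_cases hxY : x ∈ Y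
    · simp only [hedef, if_pos hxY]
      have h1 := hf.2.1 (u x) (v x)
      have h2 : |u x - v x| = |g x| := by rw [hgdef]
      calc |f (v x) - f (u x)| ≤ L * |v x - u x| := hf.2.1 (u x) (v x)
        _ = L * |g x| := by rw [← h2, abs_sub_comm]
    · simp only [hedef, if_neg hxY, abs_zero]
      exact mul_nonneg hf.1.le (abs_nonneg _)
  have henorm : G.lpNorm p e ≤ L * G.lpNorm p g :=
    stmt9_lpNorm_le_of_le hp hmg hf.1.le hebound
  -- the target function

  set A : X → ℝ := fun x => (u x - v x) + lam * (G.AopDir f Y u x - G.AopDir f Y v x) with hAdef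
  have hAs : Function.support A ⊆ Y := by
    intro x hx
    rw [Function.mem_support] at hx
    by_contra hxY
    apply hx
    have h1 : u x = 0 := by by_contra h; exact hxY (hu h)
    have h2 : v x = 0 := by by_contra h; exact hxY (hv h)
    simp only [hAdef, WGraph.AopDir, if_neg hxY, h1, h2]
    ring
  have hmA : G.memLp p A := stmt9_memLp_of_support hp hY hAs
  -- g + lam * lapDirpart = A + (-(lam * e)) pointwise
  have hsplit : (fun x => g x + lam * ((if x ∈ Y then G.lapDir Y g x else 0) + (fun _ : X => (0:ℝ)) x))
      = fun x => A x + (-(lam * e x)) := by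
    funext x
    rw [hAdef]
    simp only
    rw [stmt9_AopDir_diff G hY u v x]
    simp only [hgdef, hedef]
    ring
  have htri : G.lpNorm p (fun x => A x + (-(lam * e x)))
      ≤ G.lpNorm p A + G.lpNorm p (fun x => -(lam * e x)) :=
    stmt9_lpNorm_add_le hp A (fun x => -(lam * e x)) hmA
      (stmt9_memLp_neg hp (stmt9_memLp_const_mul hp hme lam))
  have hneg : G.lpNorm p (fun x => -(lam * e x)) = lam * G.lpNorm p e := by
    rw [stmt9_lpNorm_neg G p (fun x => lam * e x), stmt9_lpNorm_const_mul hp lam e,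
      abs_of_nonneg hlam]
  rw [hsplit] at hcore
  have hfinal : G.lpNorm p g ≤ G.lpNorm p A + lam * (L * G.lpNorm p g) := by
    calc G.lpNorm p g ≤ G.lpNorm p (fun x => A x + (-(lam * e x))) := hcore
      _ ≤ G.lpNorm p A + G.lpNorm p (fun x => -(lam * e x)) := htri
      _ = G.lpNorm p A + lam * G.lpNorm p e := by rw [hneg]
      _ ≤ G.lpNorm p A + lam * (L * G.lpNorm p g) := by
          have := mul_le_mul_of_nonneg_left henorm hlam
          linarith
  have := stmt9_lpNorm_nonneg G p g
  nlinarith [hfinal]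

end Stmt9Finite
section Stmt9Limit

open WGraph Filter Topology Function

variable {X : Type*}

lemma stmt9_limit (G : WGraph X) {f : ℝ → ℝ} {p : ℝ} (hp : 1 ≤ p) {Xn : ℕ → Set X}
    (hfin : ∀ n, (Xn n).Finite) {u v : X → ℝ}
    (hu : u ∈ G.OmegaP f p Xn) (hv : v ∈ G.OmegaP f p Xn) {lam c : ℝ} (hlam : 0 ≤ lam)
    (hstep : ∀ (n : ℕ) (a b : X → ℝ), Function.support a ⊆ Xn n → Function.support b ⊆ Xn n →
      c * G.lpNorm p (fun x => a x - b x) ≤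
        G.lpNorm p (fun x => (a x - b x)
          + lam * (G.AopDir f (Xn n) a x - G.AopDir f (Xn n) b x))) :
    c * G.lpNorm p (fun x => u x - v x) ≤
      G.lpNorm p (fun x => (u x - v x) + lam * (G.Aop f u x - G.Aop f v x)) := by
  classical
  obtain ⟨⟨hmu, _, hmAu⟩, un, hun_supp, hun_conv, hAun_conv⟩ := hu
  obtain ⟨⟨hmv, _, hmAv⟩, vn, hvn_supp, hvn_conv, hAvn_conv⟩ := hv
  have hmun : ∀ n, G.memLp p (un n) := fun n => stmt9_memLp_of_support hp (hfin n) (hun_supp n)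
  have hmvn : ∀ n, G.memLp p (vn n) := fun n => stmt9_memLp_of_support hp (hfin n) (hvn_supp n)
  have hAun_s : ∀ n, Function.support (fun x => G.AopDir f (Xn n) (un n) x) ⊆ Xn n := by
    intro n x hx
    rw [Function.mem_support] at hx
    by_contra hxY
    exact hx (by simp [WGraph.AopDir, if_neg hxY])
  have hAvn_s : ∀ n, Function.support (fun x => G.AopDir f (Xn n) (vn n) x) ⊆ Xn n := by
    intro n x hx
    rw [Function.mem_support] at hx
    by_contra hxY
    exact hx (by simp [WGraph.AopDir, if_neg hxY])
  have hmAun : ∀ n, G.memLp p (fun x => G.AopDir f (Xn n) (un n) x) :=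
    fun n => stmt9_memLp_of_support hp (hfin n) (hAun_s n)
  have hmAvn : ∀ n, G.memLp p (fun x => G.AopDir f (Xn n) (vn n) x) :=
    fun n => stmt9_memLp_of_support hp (hfin n) (hAvn_s n)
  set B := G.lpNorm p (fun x => u x - v x) with hBdef
  set An := G.lpNorm p (fun x => (u x - v x) + lam * (G.Aop f u x - G.Aop f v x)) with hAndef
  set bn : ℕ → ℝ := fun n => G.lpNorm p (fun x => un n x - vn n x) with hbndef
  set an : ℕ → ℝ := fun n => G.lpNorm p (fun x => (un n x - vn n x)
    + lam * (G.AopDir f (Xn n) (un n) x - G.AopDir f (Xn n) (vn n) x)) with handef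
  -- convergence of bn to B
  have hbn : Tendsto bn atTop (𝓝 B) := by
    rw [tendsto_iff_norm_sub_tendsto_zero]
    apply squeeze_zero (fun n => norm_nonneg _)
      (g := fun n => G.lpNorm p (fun x => un n x - u x) + G.lpNorm p (fun x => vn n x - v x))
    · intro n
      rw [Real.norm_eq_abs]
      have step1 := stmt9_abs_lpNorm_sub hp (fun x => un n x - vn n x) (fun x => u x - v x)
        (stmt9_memLp_sub hp (hmun n) (hmvn n)) (stmt9_memLp_sub hp hmu hmv)
      have heq : (fun x => (un n x - vn n x) - (u x - v x))
          = fun x => (un n x - u x) + (-(vn n x - v x)) := by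
        funext x; ring
      rw [heq] at step1
      have step2 := stmt9_lpNorm_add_le hp (fun x => un n x - u x) (fun x => -(vn n x - v x))
        (stmt9_memLp_sub hp (hmun n) hmu)
        (stmt9_memLp_neg hp (stmt9_memLp_sub hp (hmvn n) hmv))
      rw [stmt9_lpNorm_neg G p (fun x => vn n x - v x)] at step2
      exact step1.trans step2
    · simpa using hun_conv.add hvn_conv
  -- convergence of an to An
  have han : Tendsto an atTop (𝓝 An) := by
    rw [tendsto_iff_norm_sub_tendsto_zero]
    apply squeeze_zero (fun n => norm_nonneg _)
      (g := fun n => G.lpNorm p (fun x => un n x - u x) + G.lpNorm p (fun x => vn n x - v x)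
        + (lam * G.lpNorm p (fun x => G.AopDir f (Xn n) (un n) x - G.Aop f u x)
          + lam * G.lpNorm p (fun x => G.AopDir f (Xn n) (vn n) x - G.Aop f v x)))
    · intro n
      rw [Real.norm_eq_abs]
      have hm1 : G.memLp p (fun x => un n x - u x) := stmt9_memLp_sub hp (hmun n) hmu
      have hm2 : G.memLp p (fun x => -(vn n x - v x)) :=
        stmt9_memLp_neg hp (stmt9_memLp_sub hp (hmvn n) hmv)
      have hm3 : G.memLp p (fun x => lam * (G.AopDir f (Xn n) (un n) x - G.Aop f u x)) :=
        stmt9_memLp_const_mul hp (stmt9_memLp_sub hp (hmAun n) hmAu) lam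
      have hm4 : G.memLp p (fun x => -(lam * (G.AopDir f (Xn n) (vn n) x - G.Aop f v x))) :=
        stmt9_memLp_neg hp (stmt9_memLp_const_mul hp (stmt9_memLp_sub hp (hmAvn n) hmAv) lam)
      have step1 := stmt9_abs_lpNorm_sub hp
        (fun x => (un n x - vn n x)
          + lam * (G.AopDir f (Xn n) (un n) x - G.AopDir f (Xn n) (vn n) x))
        (fun x => (u x - v x) + lam * (G.Aop f u x - G.Aop f v x))
        (stmt9_memLp_add hp (stmt9_memLp_sub hp (hmun n) (hmvn n))
          (stmt9_memLp_const_mul hp (stmt9_memLp_sub hp (hmAun n) (hmAvn n)) lam))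
        (stmt9_memLp_add hp (stmt9_memLp_sub hp hmu hmv)
          (stmt9_memLp_const_mul hp (stmt9_memLp_sub hp hmAu hmAv) lam))
      have heq : (fun x => ((un n x - vn n x)
            + lam * (G.AopDir f (Xn n) (un n) x - G.AopDir f (Xn n) (vn n) x))
          - ((u x - v x) + lam * (G.Aop f u x - G.Aop f v x)))
          = fun x => (un n x - u x) + ((-(vn n x - v x))
            + ((lam * (G.AopDir f (Xn n) (un n) x - G.Aop f u x))
              + (-(lam * (G.AopDir f (Xn n) (vn n) x - G.Aop f v x))))) := by
        funext x; ring
      rw [heq] at step1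
      have t1 := stmt9_lpNorm_add_le hp _ _ hm1
        (stmt9_memLp_add hp hm2 (stmt9_memLp_add hp hm3 hm4))
      have t2 := stmt9_lpNorm_add_le hp _ _ hm2 (stmt9_memLp_add hp hm3 hm4)
      have t3 := stmt9_lpNorm_add_le hp _ _ hm3 hm4
      have e2 : G.lpNorm p (fun x => -(vn n x - v x)) = G.lpNorm p (fun x => vn n x - v x) :=
        stmt9_lpNorm_neg G p _
      have e3 : G.lpNorm p (fun x => lam * (G.AopDir f (Xn n) (un n) x - G.Aop f u x))
          = lam * G.lpNorm p (fun x => G.AopDir f (Xn n) (un n) x - G.Aop f u x) := by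
        rw [stmt9_lpNorm_const_mul hp, abs_of_nonneg hlam]
      have e4 : G.lpNorm p (fun x => -(lam * (G.AopDir f (Xn n) (vn n) x - G.Aop f v x)))
          = lam * G.lpNorm p (fun x => G.AopDir f (Xn n) (vn n) x - G.Aop f v x) := by
        rw [stmt9_lpNorm_neg G p (fun x => lam * (G.AopDir f (Xn n) (vn n) x - G.Aop f v x)),
          stmt9_lpNorm_const_mul hp, abs_of_nonneg hlam]
      rw [e2] at t2
      rw [e3, e4] at t3
      calc |an n - An| ≤ _ := step1
        _ ≤ _ := t1
        _ ≤ G.lpNorm p (fun x => un n x - u x) + (G.lpNorm p (fun x => vn n x - v x)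
            + (lam * G.lpNorm p (fun x => G.AopDir f (Xn n) (un n) x - G.Aop f u x)
              + lam * G.lpNorm p (fun x => G.AopDir f (Xn n) (vn n) x - G.Aop f v x))) := by
            exact add_le_add_right (t2.trans (add_le_add_right t3 _)) _
        _ = _ := by ring
    · have h1 := (hAun_conv.const_mul lam).add (hAvn_conv.const_mul lam)
      have h2 := (hun_conv.add hvn_conv).add h1
      simpa using h2
  exact le_of_tendsto_of_tendsto' (hbn.const_mul c) han
    (fun n => hstep n (un n) (vn n) (hun_supp n) (hvn_supp n))

end Stmt9Limit
/-- `𝒜` restricted to `Ω_p` is accretive under (F1) and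
`L`-accretive under (F2). -/
theorem stmt9 {X : Type*} [Countable X] (G : WGraph X) (f : ℝ → ℝ) (p : ℝ)
    (hp : 1 ≤ p) (hCp : 1 < p → G.CondCp p)
    (Xn : ℕ → Set X) (hfin : ∀ n, (Xn n).Finite) (hmono : Monotone Xn)
    (hexh : (⋃ n, Xn n) = Set.univ) :
    (CondF1 f → ∀ u ∈ G.OmegaP f p Xn, ∀ v ∈ G.OmegaP f p Xn, ∀ lam : ℝ, 0 < lam →
      G.lpNorm p (fun x => u x - v x) ≤
        G.lpNorm p (fun x => (u x - v x) + lam * (G.Aop f u x - G.Aop f v x))) ∧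
    (∀ L : ℝ, CondF2 f L →
      ∀ u ∈ G.OmegaP f p Xn, ∀ v ∈ G.OmegaP f p Xn, ∀ lam : ℝ, 0 ≤ lam → lam * L < 1 →
        (1 - L * lam) * G.lpNorm p (fun x => u x - v x) ≤
          G.lpNorm p (fun x => (u x - v x) + lam * (G.Aop f u x - G.Aop f v x))) := by
  constructor
  · intro hf u hu v hv lam hlam
    have h := stmt9_limit G hp hfin hu hv (le_of_lt hlam) (c := 1)
      (fun n a b ha hb => by
        simpa using stmt9_finite_F1 G hp hf (hfin n) a b ha hb (le_of_lt hlam))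
    simpa using h
  · intro L hf u hu v hv lam hlam hlamL
    exact stmt9_limit G hp hfin hu hv hlam (c := 1 - L * lam)
      (fun n a b ha hb => stmt9_finite_F2 G hp hf (hfin n) a b ha hb hlam)
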